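/- Soundness of modular DRUP proofs: if π is a valid modular DRUP proof, then the conjunction of all clauses asserted into module s together with all clauses asserted into module m is unsatisfiable. -/

import Mathlib

/-- Propositional variables. -/
abbrev Var := ℕ
/-- A literal is a variable together with a polarity. -/
abbrev Lit := Var × Bool
/-- A clause is a finite set of literals. -/
abbrev Clause := Finset Lit
/-- A total truth assignment. -/
abbrev Assignment := Var → Bool

/-- Negation of a literal. -/
def Lit.neg (l : Lit) : Lit := (l.1, !l.2)

/-- An assignment satisfies a literal. -/
def satLit (σ : Assignment) (l : Lit) : Prop := σ l.1 = l.2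
/-- An assignment satisfies a clause (some literal is true). -/
def satClause (σ : Assignment) (C : Clause) : Prop := ∃ l ∈ C, satLit σ l
/-- An assignment satisfies a set of clauses. -/
def satSet (σ : Assignment) (Γ : Set Clause) : Prop := ∀ C ∈ Γ, satClause σ C
/-- Semantic consequence: every model of Γ satisfies C. -/
def entails (Γ : Set Clause) (C : Clause) : Prop :=
  ∀ σ : Assignment, satSet σ Γ → satClause σ C

/-- Unit-propagation closure: the least set of literals containing the
assumptions `A` and closed under the unit-propagation rule for clauses of `Γ`:
if all literals of a clause but one are falsified (their negations derived),
the remaining literal is derived. -/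
inductive UPC (Γ : Set Clause) (A : Set Lit) : Lit → Prop
  | assm {l : Lit} : l ∈ A → UPC Γ A l
  | prop {C : Clause} {l : Lit} : C ∈ Γ → l ∈ C →
      (∀ l' ∈ C, l' ≠ l → UPC Γ A (Lit.neg l')) → UPC Γ A l

/-- Unit propagation from `Γ` under assumptions `A` reaches a conflict:
some clause of `Γ` has all its literals falsified by the closure. -/
def upConflict (Γ : Set Clause) (A : Set Lit) : Prop :=
  ∃ C ∈ Γ, ∀ l ∈ C, UPC Γ A (Lit.neg l)

/-- `RUP Γ C` (written `Γ ⊢_UP C`): unit propagation from `Γ` together with the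
negations of the literals of `C` reaches a conflict. -/
def RUP (Γ : Set Clause) (C : Clause) : Prop :=
  upConflict Γ {l | ∃ m ∈ C, l = Lit.neg m}

/-- The two modules: secondary `s` and main `m`. -/
inductive ModIdx | s | m
deriving DecidableEq

/-- A step of a modular DRUP proof. -/
inductive MStep
  | asserted (idx : ModIdx) (c : Clause)
  | rup (idx : ModIdx) (c : Clause)
  | cp (src dst : ModIdx) (c : Clause)
  | del (idx : ModIdx) (c : Clause)
deriving DecidableEq

/-- A step adds clause `c` to module `idx` (by assertion, rup, or copy into `idx`). -/
def MStep.addsTo : MStep → ModIdx → Clause → Prop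
  | .asserted i c, j, d => i = j ∧ c = d
  | .rup i c, j, d => i = j ∧ c = d
  | .cp _ i c, j, d => i = j ∧ c = d
  | .del _ _, _, _ => False

/-- Active clauses of module `idx`: added to `idx` and not later deleted from `idx`. -/
def mactive (π : List MStep) (idx : ModIdx) : Set Clause :=
  {c | ∃ i, ∃ hi : i < π.length, (π[i]'hi).addsTo idx c ∧
      ∀ k, ∀ hk : k < π.length, i < k → (π[k]'hk) ≠ MStep.del idx c}

/-- All clauses asserted into module `idx`. -/
def allasserted (π : List MStep) (idx : ModIdx) : Set Clause :=
  {c | MStep.asserted idx c ∈ π}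

/-- Validity of a modular DRUP proof: every rup step is RUP w.r.t. the active
clauses of its module, every copy step's clause is RUP in its source module,
and the final step adds ⊥ to module `m` (by rup or by copy from `s`). -/
def validModular (π : List MStep) : Prop :=
  (∀ i, ∀ hi : i < π.length, ∀ idx c,
      (π[i]'hi) = MStep.rup idx c → RUP (mactive (π.take i) idx) c) ∧
  (∀ i, ∀ hi : i < π.length, ∀ src dst c,
      (π[i]'hi) = MStep.cp src dst c → RUP (mactive (π.take i) src) c) ∧
  ∃ hne : π ≠ [],
    π.getLast hne = MStep.rup ModIdx.m ∅ ∨ π.getLast hne = MStep.cp ModIdx.s ModIdx.m ∅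

/-- The proof contains no deletion steps. -/
def noDel (π : List MStep) : Prop := ∀ st ∈ π, ∀ idx c, st ≠ MStep.del idx c

/-- Backward clauses of a prefix: clauses copied from `m` to `s`. -/
def LB (π : List MStep) : Set Clause := {c | MStep.cp ModIdx.m ModIdx.s c ∈ π}
/-- Forward clauses of a prefix: clauses copied from `s` to `m`. -/
def LF (π : List MStep) : Set Clause := {c | MStep.cp ModIdx.s ModIdx.m c ∈ π}

lemma satLit_neg {σ : Assignment} {l : Lit} : satLit σ (Lit.neg l) ↔ ¬ satLit σ l := by
  simp [satLit, Lit.neg]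
  cases l.2 <;> simp

/-- RUP implies semantic entailment. -/
lemma rup_entails {Γ : Set Clause} {C : Clause} (h : RUP Γ C) : entails Γ C := by
  intro σ hσ
  by_contra hC
  obtain ⟨D, hD, hall⟩ := h
  have key : ∀ l, UPC Γ {l | ∃ m ∈ C, l = Lit.neg m} l → satLit σ l := by
    intro l hl
    induction hl with
    | assm hmem =>
      obtain ⟨m, hm, rfl⟩ := hmem
      rw [satLit_neg]
      exact fun hs => hC ⟨m, hm, hs⟩
    | @prop C' l' hCΓ hlC hrest ih =>
      obtain ⟨l'', hl'', hs⟩ := hσ C' hCΓ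
      by_cases heq : l'' = l'
      · exact heq ▸ hs
      · exact absurd hs (satLit_neg.mp (ih l'' hl'' heq))
  obtain ⟨l, hl, hs⟩ := hσ D hD
  exact (satLit_neg.mp (key _ (hall l hl))) hs

lemma entails_cut {Γ Δ : Set Clause} {C : Clause}
    (h1 : ∀ D ∈ Δ, entails Γ D) (h2 : entails Δ C) : entails Γ C :=
  fun σ hσ => h2 σ (fun D hD => h1 D hD σ hσ)

/-- a valid modular DRUP proof certifies that the conjunction of
clauses asserted into module `s` with those asserted into module `m` is unsat. -/
theorem modular_drup_sound (π : List MStep) (h : validModular π) :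
    ¬ ∃ σ : Assignment, satSet σ (allasserted π ModIdx.s ∪ allasserted π ModIdx.m) := by
  rintro ⟨σ, hσ⟩
  set Γ := allasserted π ModIdx.s ∪ allasserted π ModIdx.m with hΓ
  obtain ⟨hrup, hcp, hne, hlast⟩ := h
  -- every clause added at any step is entailed by Γ
  have main : ∀ i, ∀ hi : i < π.length, ∀ idx c,
      (π[i]'hi).addsTo idx c → entails Γ c := by
    intro i
    induction i using Nat.strong_induction_on with
    | _ i ih =>
      intro hi idx c hadd
      have active_ent : ∀ j, (∀ D ∈ mactive (π.take i) j, entails Γ D) := by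
        intro j D hD
        obtain ⟨k, hk, hk2, _⟩ := hD
        have hk' : k < i := lt_of_lt_of_le hk (by simp [List.length_take])
        have hkπ : k < π.length := lt_of_lt_of_le hk (by simp [List.length_take])
        have : (π.take i)[k]'hk = π[k]'hkπ := by simp [List.getElem_take]
        exact ih k hk' hkπ j D (this ▸ hk2)
      cases hπi : π[i]'hi with
      | asserted j d =>
        obtain ⟨rfl, rfl⟩ := hπi ▸ hadd
        have : MStep.asserted j d ∈ π := hπi ▸ List.getElem_mem hi
        intro σ' hσ'
        cases j with
        | s => exact hσ' d (Or.inl this)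
        | m => exact hσ' d (Or.inr this)
      | rup j d =>
        obtain ⟨rfl, rfl⟩ := hπi ▸ hadd
        exact entails_cut (active_ent j) (rup_entails (hrup i hi j d hπi))
      | cp src dst d =>
        obtain ⟨rfl, rfl⟩ := hπi ▸ hadd
        exact entails_cut (active_ent src) (rup_entails (hcp i hi src dst d hπi))
      | del j d => exact absurd hadd (by rw [hπi]; exact id)
  have hlen : π.length - 1 < π.length :=
    Nat.sub_lt (List.length_pos_iff.mpr hne) one_pos
  have hgl : π.getLast hne = π[π.length - 1]'hlen := List.getLast_eq_getElem hne
  have hbot : entails Γ ∅ := by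
    cases hlast with
    | inl h' => exact main _ hlen ModIdx.m ∅ (by rw [← hgl, h']; exact ⟨rfl, rfl⟩)
    | inr h' => exact main _ hlen ModIdx.m ∅ (by rw [← hgl, h']; exact ⟨rfl, rfl⟩)
  obtain ⟨l, hl, _⟩ := hbot σ hσ
  exact absurd hl (Finset.notMem_empty l)
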